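/- Let 1 < w₁, w₂, w₃ < ∞ with 1/w₃ > 1/w₁ and 1/w₃ > 1/w₂, and define v₁, v₂ by 1/v₁ := 1/w₃ − 1/w₁ and 1/v₂ := 1/w₃ − 1/w₂; let v₁′, v₂′, w₃′ denote the respective conjugate exponents. Let ε > 0 and let φ : ℝ → ℝ be measurable. Then there exists a constant c > 0, depending only on w₁, w₂, w₃ and ε (in particular independent of φ), such that for every measurable function w : ℝ² → [0, ∞], (∫_ℝ (∫_ℝ w(ξ, τ)^{v₂′} dτ)^{v₁′/v₂′} dξ)^{1/v₁′} ≤ c · (∫∫_{ℝ²} ⟨ξ⟩^{(1/w₁ + ε) w₃′} ⟨τ + φ(ξ)⟩^{(1/w₂ + ε) w₃′} w(ξ, τ)^{w₃′} dξ dτ)^{1/w₃′}, all quantities understood in [0, ∞]. -/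

import Mathlib

open MeasureTheory

/-- Japanese bracket ⟨x⟩ = (1 + x²)^{1/2}. -/
noncomputable def jap (x : ℝ) : ℝ := Real.sqrt (1 + x ^ 2)

lemma jap_one_le (x : ℝ) : 1 ≤ jap x := by
  have h : (1 : ℝ) = Real.sqrt 1 := by simp
  rw [jap, h]
  exact Real.sqrt_le_sqrt (by nlinarith)

lemma jap_pos (x : ℝ) : 0 < jap x := lt_of_lt_of_le one_pos (jap_one_le x)

lemma measurable_jap : Measurable jap := by unfold jap; fun_prop

lemma jap_rpow (x s : ℝ) : jap x ^ s = (1 + x ^ 2) ^ (s / 2) := by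
  rw [jap, Real.sqrt_eq_rpow, ← Real.rpow_mul (by positivity)]
  norm_num
  ring_nf

/-- Finiteness of the bracket integral for exponent `s > 1`. -/
lemma jap_lintegral_lt_top {s : ℝ} (hs : 1 < s) :
    (∫⁻ x : ℝ, ENNReal.ofReal (jap x ^ (-s))) < ⊤ := by
  have hint : Integrable (fun x : ℝ => (1 + ‖x‖ ^ 2) ^ (-s / 2)) := by
    apply integrable_rpow_neg_one_add_norm_sq
    simpa using hs
  have h0 : ∀ x : ℝ, jap x ^ (-s) = (1 + ‖x‖ ^ 2) ^ (-s / 2) := fun x => by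
    rw [jap_rpow]
    norm_num [Real.norm_eq_abs, sq_abs]
  simp_rw [h0]
  exact (hasFiniteIntegral_iff_ofReal (Filter.Eventually.of_forall fun x => by positivity)).1
    hint.hasFiniteIntegral

/-- Generic weighted Hölder step on ℝ. -/
lemma gen_holder {p' P Q : ℝ} (hp' : 0 < p') (hP : 0 < P) (hQ : 0 < Q)
    (hpq : 1 / p' = 1 / P + 1 / Q) {G : ℝ → ℝ} (hG : Measurable G) (hG1 : ∀ x, 1 ≤ G x)
    {m : ℝ → ENNReal} (hm : Measurable m) :
    (∫⁻ x, m x ^ p') ≤ (∫⁻ x, ENNReal.ofReal (G x ^ P) * m x ^ P) ^ (p' / P) *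
      (∫⁻ x, ENNReal.ofReal (G x ^ (-Q))) ^ (p' / Q) := by
  have hp'0 : p' ≠ 0 := hp'.ne'
  have hP0 : P ≠ 0 := hP.ne'
  have hQ0 : Q ≠ 0 := hQ.ne'
  set g : ℝ → ENNReal := fun x => ENNReal.ofReal (G x) with hg
  have hGpos : ∀ x, 0 < G x := fun x => lt_of_lt_of_le one_pos (hG1 x)
  have hg0 : ∀ x, g x ≠ 0 := fun x => by
    simp only [hg, ne_eq, ENNReal.ofReal_eq_zero, not_le]
    exact hGpos x
  have hgtop : ∀ x, g x ≠ ⊤ := fun x => ENNReal.ofReal_ne_top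
  have hPp' : p' < P := by
    have h1 : 1 / P < 1 / p' := by
      rw [hpq]
      have : 0 < 1 / Q := by positivity
      linarith
    have := (div_lt_div_iff_of_pos_left one_pos hP hp').mp h1
    exact this
  have hconj : (P / p').HolderConjugate (Q / p') := by
    rw [Real.holderConjugate_iff]
    constructor
    · exact (one_lt_div hp').2 hPp'
    · rw [inv_div, inv_div]
      field_simp
      field_simp at hpq
      linarith
  have hmg : Measurable g := by fun_prop
  set f₁ : ℝ → ENNReal := fun x => (g x * m x) ^ p' with hf₁def
  set f₂ : ℝ → ENNReal := fun x => g x ^ (-p') with hf₂def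
  have hf₁ : Measurable f₁ := by fun_prop
  have hf₂ : Measurable f₂ := by fun_prop
  have key : ∀ x, m x ^ p' = (f₁ * f₂) x := by
    intro x
    have hne : g x ^ p' ≠ 0 := (ENNReal.rpow_pos (pos_iff_ne_zero.2 (hg0 x)) (hgtop x)).ne'
    have hnet : g x ^ p' ≠ ⊤ := ENNReal.rpow_ne_top_of_nonneg hp'.le (hgtop x)
    simp only [Pi.mul_apply, hf₁def, hf₂def]
    rw [ENNReal.mul_rpow_of_nonneg _ _ hp'.le, ENNReal.rpow_neg, mul_comm (g x ^ p') (m x ^ p'),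
      mul_assoc, ENNReal.mul_inv_cancel hne hnet, mul_one]
  calc (∫⁻ x, m x ^ p') = ∫⁻ x, (f₁ * f₂) x := lintegral_congr key
    _ ≤ (∫⁻ x, f₁ x ^ (P / p')) ^ (1 / (P / p')) * (∫⁻ x, f₂ x ^ (Q / p')) ^ (1 / (Q / p')) :=
        ENNReal.lintegral_mul_le_Lp_mul_Lq volume hconj hf₁.aemeasurable hf₂.aemeasurable
    _ = (∫⁻ x, ENNReal.ofReal (G x ^ P) * m x ^ P) ^ (p' / P) *
        (∫⁻ x, ENNReal.ofReal (G x ^ (-Q))) ^ (p' / Q) := by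
        rw [one_div_div, one_div_div]
        congr 1
        · congr 1
          apply lintegral_congr
          intro x
          rw [hf₁def, ← ENNReal.rpow_mul, mul_div_cancel₀ _ hp'0,
            ENNReal.mul_rpow_of_nonneg _ _ hP.le, hg, ENNReal.ofReal_rpow_of_pos (hGpos x)]
        · congr 1
          apply lintegral_congr
          intro x
          rw [hf₂def, ← ENNReal.rpow_mul]
          have : -p' * (Q / p') = -Q := by field_simp
          rw [this, hg, ENNReal.ofReal_rpow_of_pos (hGpos x)]

/-- Embedding (2.4), Fourier-side: mixed-norm estimate
(∫_ξ (∫_τ w^{v₂′})^{v₁′/v₂′})^{1/v₁′}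
  ≤ c (∫∫ ⟨ξ⟩^{(1/w₁+ε)w₃′} ⟨τ+φ(ξ)⟩^{(1/w₂+ε)w₃′} w^{w₃′})^{1/w₃′},
where 1/v₁ = 1/w₃ − 1/w₁, 1/v₂ = 1/w₃ − 1/w₂, with c independent of φ. -/
theorem stmt_8 (w₁ w₂ w₃ v₁ v₂ v₁' v₂' w₃' ε : ℝ)
    (hw₁ : 1 < w₁) (hw₂ : 1 < w₂) (hw₃ : 1 < w₃)
    (h₁ : 1 / w₃ > 1 / w₁) (h₂ : 1 / w₃ > 1 / w₂)
    (hv₁ : 1 / v₁ = 1 / w₃ - 1 / w₁) (hv₂ : 1 / v₂ = 1 / w₃ - 1 / w₂)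
    (hv₁' : 1 / v₁ + 1 / v₁' = 1) (hv₂' : 1 / v₂ + 1 / v₂' = 1)
    (hw₃' : 1 / w₃ + 1 / w₃' = 1) (hε : 0 < ε) :
    ∃ c : ℝ, 0 < c ∧ ∀ φ : ℝ → ℝ, Measurable φ → ∀ w : ℝ × ℝ → ENNReal, Measurable w →
      (∫⁻ ξ : ℝ, (∫⁻ τ : ℝ, w (ξ, τ) ^ v₂') ^ (v₁' / v₂')) ^ (1 / v₁') ≤
        ENNReal.ofReal c *
          (∫⁻ q : ℝ × ℝ,
            ENNReal.ofReal (jap q.1 ^ ((1 / w₁ + ε) * w₃') *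
              jap (q.2 + φ q.1) ^ ((1 / w₂ + ε) * w₃')) * w q ^ w₃') ^ (1 / w₃') := by
  -- basic positivity
  have hw₁0 : (0:ℝ) < w₁ := lt_trans one_pos hw₁
  have hw₂0 : (0:ℝ) < w₂ := lt_trans one_pos hw₂
  have hw₃0 : (0:ℝ) < w₃ := lt_trans one_pos hw₃
  have hiw₁ : 0 < 1 / w₁ := by positivity
  have hiw₂ : 0 < 1 / w₂ := by positivity
  have hiw₃ : 0 < 1 / w₃ := by positivity
  have hiw₃lt : 1 / w₃ < 1 := by
    rw [div_lt_one hw₃0]; exact hw₃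
  have hw₃'pos : 0 < w₃' := by
    have h : 0 < 1 / w₃' := by linarith
    exact (one_div_pos).1 h
  have hv₂'pos : 0 < v₂' := by
    have h : 0 < 1 / v₂' := by
      have : 1 / v₂ < 1 := by rw [hv₂]; linarith
      linarith
    exact (one_div_pos).1 h
  have hv₁'pos : 0 < v₁' := by
    have h : 0 < 1 / v₁' := by
      have : 1 / v₁ < 1 := by rw [hv₁]; linarith
      linarith
    exact (one_div_pos).1 h
  -- key exponent identities
  have hid₂ : 1 / v₂' = 1 / w₃' + 1 / w₂ := by
    have := hv₂'; rw [hv₂] at this; linarith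
  have hid₁ : 1 / v₁' = 1 / w₃' + 1 / w₁ := by
    have := hv₁'; rw [hv₁] at this; linarith
  set A : ℝ := 1 / w₂ + ε with hA
  set B : ℝ := 1 / w₁ + ε with hB
  have hApos : 0 < A := by positivity
  have hBpos : 0 < B := by positivity
  have hAw₂ : 1 < A * w₂ := by
    have : A * w₂ = 1 + ε * w₂ := by rw [hA]; field_simp
    rw [this]; nlinarith
  have hBw₁ : 1 < B * w₁ := by
    have : B * w₁ = 1 + ε * w₁ := by rw [hB]; field_simp
    rw [this]; nlinarith
  set K₂ : ENNReal := ∫⁻ τ : ℝ, ENNReal.ofReal (jap τ ^ (-(A * w₂))) with hK₂def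
  set K₁ : ENNReal := ∫⁻ ξ : ℝ, ENNReal.ofReal (jap ξ ^ (-(B * w₁))) with hK₁def
  have hK₂top : K₂ ≠ ⊤ := (jap_lintegral_lt_top hAw₂).ne
  have hK₁top : K₁ ≠ ⊤ := (jap_lintegral_lt_top hBw₁).ne
  set D : ENNReal := K₂ ^ (1 / w₂) * K₁ ^ (1 / w₁) with hD
  have hDtop : D ≠ ⊤ :=
    ENNReal.mul_ne_top (ENNReal.rpow_ne_top_of_nonneg (by positivity) hK₂top)
      (ENNReal.rpow_ne_top_of_nonneg (by positivity) hK₁top)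
  refine ⟨max 1 D.toReal, lt_of_lt_of_le one_pos (le_max_left _ _), ?_⟩
  intro φ hφ w hw
  have hDle : D ≤ ENNReal.ofReal (max 1 D.toReal) := by
    calc D = ENNReal.ofReal D.toReal := (ENNReal.ofReal_toReal hDtop).symm
      _ ≤ _ := ENNReal.ofReal_le_ofReal (le_max_right _ _)
  -- the inner function F
  set F : ℝ → ENNReal :=
    fun ξ => ∫⁻ τ : ℝ, ENNReal.ofReal (jap (τ + φ ξ) ^ (A * w₃')) * w (ξ, τ) ^ w₃' with hFdef
  have hFmeas : Measurable F := by
    apply Measurable.lintegral_prod_right'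
      (f := fun p : ℝ × ℝ => ENNReal.ofReal (jap (p.2 + φ p.1) ^ (A * w₃')) * w p ^ w₃')
    have h1 : Measurable fun p : ℝ × ℝ => jap (p.2 + φ p.1) :=
      measurable_jap.comp (measurable_snd.add (hφ.comp measurable_fst))
    fun_prop
  -- inner Hölder step
  have inner : ∀ ξ : ℝ, (∫⁻ τ : ℝ, w (ξ, τ) ^ v₂') ≤
      F ξ ^ (v₂' / w₃') * K₂ ^ (v₂' / w₂) := by
    intro ξ
    have hGmeas : Measurable fun τ : ℝ => jap (τ + φ ξ) ^ A := by
      have : Measurable fun τ : ℝ => jap (τ + φ ξ) :=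
        measurable_jap.comp (measurable_id.add_const _)
      fun_prop
    have hG1 : ∀ τ : ℝ, 1 ≤ jap (τ + φ ξ) ^ A :=
      fun τ => Real.one_le_rpow (jap_one_le _) hApos.le
    have hmmeas : Measurable fun τ : ℝ => w (ξ, τ) := hw.comp measurable_prodMk_left
    have H := gen_holder hv₂'pos hw₃'pos hw₂0 hid₂ hGmeas hG1 hmmeas
    have e1 : (∫⁻ τ : ℝ, ENNReal.ofReal ((jap (τ + φ ξ) ^ A) ^ w₃') * w (ξ, τ) ^ w₃') = F ξ := by
      apply lintegral_congr
      intro τ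
      rw [← Real.rpow_mul (jap_pos _).le]
    have e2 : (∫⁻ τ : ℝ, ENNReal.ofReal ((jap (τ + φ ξ) ^ A) ^ (-w₂))) = K₂ := by
      have e : ∀ τ : ℝ, (jap (τ + φ ξ) ^ A) ^ (-w₂) = jap (τ + φ ξ) ^ (-(A * w₂)) := by
        intro τ
        rw [← Real.rpow_mul (jap_pos _).le, mul_neg]
      simp_rw [e]
      exact lintegral_add_right_eq_self (fun τ => ENNReal.ofReal (jap τ ^ (-(A * w₂)))) (φ ξ)
    rw [e1, e2] at H
    exact H
  have hnn1 : (0:ℝ) ≤ v₁' / v₂' := by positivity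
  have hv₂'0 : v₂' ≠ 0 := hv₂'pos.ne'
  have hv₁'0 : v₁' ≠ 0 := hv₁'pos.ne'
  have hw₃'0 : w₃' ≠ 0 := hw₃'pos.ne'
  -- step 2: integrate in ξ
  have step2 : (∫⁻ ξ : ℝ, (∫⁻ τ : ℝ, w (ξ, τ) ^ v₂') ^ (v₁' / v₂')) ≤
      (∫⁻ ξ : ℝ, F ξ ^ (v₁' / w₃')) * K₂ ^ (v₁' / w₂) := by
    calc (∫⁻ ξ : ℝ, (∫⁻ τ : ℝ, w (ξ, τ) ^ v₂') ^ (v₁' / v₂'))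
        ≤ ∫⁻ ξ : ℝ, (F ξ ^ (v₂' / w₃') * K₂ ^ (v₂' / w₂)) ^ (v₁' / v₂') :=
          lintegral_mono fun ξ => ENNReal.rpow_le_rpow (inner ξ) hnn1
      _ = ∫⁻ ξ : ℝ, F ξ ^ (v₁' / w₃') * K₂ ^ (v₁' / w₂) := by
          apply lintegral_congr
          intro ξ
          rw [ENNReal.mul_rpow_of_nonneg _ _ hnn1, ← ENNReal.rpow_mul, ← ENNReal.rpow_mul,
            show v₂' / w₃' * (v₁' / v₂') = v₁' / w₃' by field_simp,
            show v₂' / w₂ * (v₁' / v₂') = v₁' / w₂ by field_simp]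
      _ = (∫⁻ ξ : ℝ, F ξ ^ (v₁' / w₃')) * K₂ ^ (v₁' / w₂) :=
          lintegral_mul_const' _ _ (ENNReal.rpow_ne_top_of_nonneg (by positivity) hK₂top)
  -- outer Hölder step
  have hGmeas1 : Measurable fun ξ : ℝ => jap ξ ^ B := by
    have := measurable_jap; fun_prop
  have hG11 : ∀ ξ : ℝ, 1 ≤ jap ξ ^ B := fun ξ => Real.one_le_rpow (jap_one_le _) hBpos.le
  have hmF : Measurable fun ξ : ℝ => F ξ ^ (1 / w₃') := by fun_prop
  have outer := gen_holder hv₁'pos hw₃'pos hw₁0 hid₁ hGmeas1 hG11 hmF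
  have o1 : ∀ ξ : ℝ, (F ξ ^ (1 / w₃')) ^ v₁' = F ξ ^ (v₁' / w₃') := by
    intro ξ
    rw [← ENNReal.rpow_mul, one_div, inv_mul_eq_div]
  have o2 : ∀ ξ : ℝ, ENNReal.ofReal ((jap ξ ^ B) ^ w₃') * (F ξ ^ (1 / w₃')) ^ w₃' =
      ENNReal.ofReal (jap ξ ^ (B * w₃')) * F ξ := by
    intro ξ
    rw [← Real.rpow_mul (jap_pos _).le, ← ENNReal.rpow_mul, one_div,
      inv_mul_cancel₀ hw₃'0, ENNReal.rpow_one]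
  have o3 : (∫⁻ ξ : ℝ, ENNReal.ofReal ((jap ξ ^ B) ^ (-w₁))) = K₁ := by
    apply lintegral_congr
    intro ξ
    rw [← Real.rpow_mul (jap_pos _).le, mul_neg]
  simp_rw [o1, o2] at outer
  rw [o3] at outer
  -- Tonelli: identify the double integral
  set I : ENNReal := ∫⁻ q : ℝ × ℝ,
      ENNReal.ofReal (jap q.1 ^ ((1 / w₁ + ε) * w₃') *
        jap (q.2 + φ q.1) ^ ((1 / w₂ + ε) * w₃')) * w q ^ w₃' with hIdef
  have hImeas : Measurable fun q : ℝ × ℝ =>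
      ENNReal.ofReal (jap q.1 ^ ((1 / w₁ + ε) * w₃') *
        jap (q.2 + φ q.1) ^ ((1 / w₂ + ε) * w₃')) * w q ^ w₃' := by
    have h1 : Measurable fun q : ℝ × ℝ => jap (q.2 + φ q.1) :=
      measurable_jap.comp (measurable_snd.add (hφ.comp measurable_fst))
    have h2 : Measurable fun q : ℝ × ℝ => jap q.1 := measurable_jap.comp measurable_fst
    fun_prop
  have tonelli : I = ∫⁻ ξ : ℝ, ENNReal.ofReal (jap ξ ^ (B * w₃')) * F ξ := by
    rw [hIdef, Measure.volume_eq_prod, lintegral_prod _ hImeas.aemeasurable]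
    apply lintegral_congr
    intro ξ
    have pt : ∀ τ : ℝ, ENNReal.ofReal (jap ξ ^ ((1 / w₁ + ε) * w₃') *
        jap (τ + φ ξ) ^ ((1 / w₂ + ε) * w₃')) * w (ξ, τ) ^ w₃' =
        ENNReal.ofReal (jap ξ ^ (B * w₃')) *
          (ENNReal.ofReal (jap (τ + φ ξ) ^ (A * w₃')) * w (ξ, τ) ^ w₃') := by
      intro τ
      rw [ENNReal.ofReal_mul (Real.rpow_nonneg (jap_pos ξ).le _), mul_assoc]
    simp_rw [pt]
    rw [lintegral_const_mul]
    have : Measurable fun τ : ℝ => jap (τ + φ ξ) :=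
      measurable_jap.comp (measurable_id.add_const _)
    fun_prop
  -- combine
  have main : (∫⁻ ξ : ℝ, (∫⁻ τ : ℝ, w (ξ, τ) ^ v₂') ^ (v₁' / v₂')) ≤
      (I ^ (v₁' / w₃') * K₁ ^ (v₁' / w₁)) * K₂ ^ (v₁' / w₂) := by
    refine step2.trans (mul_le_mul_left ?_ _)
    rw [tonelli]
    exact outer
  calc (∫⁻ ξ : ℝ, (∫⁻ τ : ℝ, w (ξ, τ) ^ v₂') ^ (v₁' / v₂')) ^ (1 / v₁')
      ≤ ((I ^ (v₁' / w₃') * K₁ ^ (v₁' / w₁)) * K₂ ^ (v₁' / w₂)) ^ (1 / v₁') :=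
        ENNReal.rpow_le_rpow main (by positivity)
    _ = I ^ (1 / w₃') * K₁ ^ (1 / w₁) * K₂ ^ (1 / w₂) := by
        rw [ENNReal.mul_rpow_of_nonneg _ _ (by positivity),
          ENNReal.mul_rpow_of_nonneg _ _ (by positivity),
          ← ENNReal.rpow_mul, ← ENNReal.rpow_mul, ← ENNReal.rpow_mul,
          show v₁' / w₃' * (1 / v₁') = 1 / w₃' by field_simp,
          show v₁' / w₁ * (1 / v₁') = 1 / w₁ by field_simp,
          show v₁' / w₂ * (1 / v₁') = 1 / w₂ by field_simp]
    _ = D * I ^ (1 / w₃') := by rw [hD]; ring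
    _ ≤ ENNReal.ofReal (max 1 D.toReal) * I ^ (1 / w₃') := mul_le_mul_left hDle _
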